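/- Let σ > 0, let a, b be real numbers with Δ = a − b, let μ = gaussianReal a (σ²) and ν = gaussianReal b (σ²), and let λ ≥ 0 be a real number. Then the λ-th moment of the privacy loss equals exp(λ·(λ+1)·Δ²/(2σ²)); that is, ∫ ((dμ/dν)(x))^λ dμ(x) = exp(λ·(λ+1)·Δ²/(2σ²)), where dμ/dν is the Radon–Nikodym derivative of μ with respect to ν (equivalently, the ratio of their Gaussian densities). -/

import Mathlib

open MeasureTheory ProbabilityTheory Real

theorem gaussian_privacy_loss_moment
    (σ a b Δ lam : ℝ) (hσ : 0 < σ) (hΔ : Δ = a - b) (hlam : 0 ≤ lam) :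
    ∫ x, (((gaussianReal a ((σ ^ 2).toNNReal)).rnDeriv
        (gaussianReal b ((σ ^ 2).toNNReal)) x).toReal) ^ lam
        ∂(gaussianReal a ((σ ^ 2).toNNReal)) =
      Real.exp (lam * (lam + 1) * Δ ^ 2 / (2 * σ ^ 2)) := by
  set v : NNReal := (σ ^ 2).toNNReal with hv_def
  have hσ2 : (0:ℝ) < σ ^ 2 := by positivity
  have hv : v ≠ 0 := by
    simp [hv_def, Real.toNNReal_eq_zero, not_le, hσ2, hσ.ne']
  have hvr : (v : ℝ) = σ ^ 2 := Real.coe_toNNReal _ hσ2.le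
  have hvpos : (0:ℝ) < (v:ℝ) := hvr ▸ hσ2
  have hA := ProbabilityTheory.gaussianReal_of_var_ne_zero a hv
  have hB := ProbabilityTheory.gaussianReal_of_var_ne_zero b hv
  have h_rn : (gaussianReal a v).rnDeriv (gaussianReal b v)
      =ᵐ[volume] fun x ↦ (gaussianPDF b v x)⁻¹ * gaussianPDF a v x := by
    have h1 := MeasureTheory.Measure.rnDeriv_withDensity_right (gaussianReal a v) volume
      (f := gaussianPDF b v) (measurable_gaussianPDF b v).aemeasurable
      (ae_of_all _ fun x ↦ (gaussianPDF_pos b hv x).ne')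
      (ae_of_all _ fun x ↦ by simp [gaussianPDF])
    rw [← hB] at h1
    have h2 := ProbabilityTheory.rnDeriv_gaussianReal a v
    filter_upwards [h1, h2] with x hx1 hx2
    rw [hx1, hx2]
  have h_ae : ∀ᵐ x ∂(gaussianReal a v),
      (((gaussianReal a v).rnDeriv (gaussianReal b v) x).toReal) ^ lam
        = (gaussianPDFReal a v x / gaussianPDFReal b v x) ^ lam := by
    have := (gaussianReal_absolutelyContinuous a hv).ae_le h_rn
    filter_upwards [this] with x hx
    have hpa := gaussianPDFReal_pos a v x hv
    have hpb := gaussianPDFReal_pos b v x hv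
    rw [hx]
    simp only [gaussianPDF]
    rw [← ENNReal.ofReal_inv_of_pos hpb,
      ← ENNReal.ofReal_mul (by positivity),
      ENNReal.toReal_ofReal (by positivity), div_eq_inv_mul]
  rw [integral_congr_ae h_ae]
  have h_pdf : gaussianPDF a v = fun x ↦ ((gaussianPDFReal a v x).toNNReal : ENNReal) := by
    funext x; simp [gaussianPDF, ENNReal.ofReal]
  rw [hA, h_pdf, integral_withDensity_eq_integral_smul
    ((measurable_gaussianPDFReal a v).real_toNNReal)]
  subst hΔ
  have h_pt : ∀ x : ℝ, (gaussianPDFReal a v x).toNNReal •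
      ((gaussianPDFReal a v x / gaussianPDFReal b v x) ^ lam)
      = Real.exp (lam * (lam + 1) * (a - b) ^ 2 / (2 * σ ^ 2)) * gaussianPDFReal (a + lam * (a - b)) v x := by
    intro x
    have hpa := gaussianPDFReal_pos a v x hv
    have hpb := gaussianPDFReal_pos b v x hv
    rw [NNReal.smul_def, smul_eq_mul, Real.coe_toNNReal _ hpa.le]
    simp only [gaussianPDFReal]
    rw [mul_div_mul_left _ _ (by positivity : (√(2 * π * (v:ℝ)))⁻¹ ≠ 0),
      ← Real.exp_sub, ← Real.exp_mul, mul_comm]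
    rw [mul_left_comm, mul_left_comm (rexp _), ← Real.exp_add, ← Real.exp_add]
    congr 2
    rw [hvr]
    field_simp
    ring
  simp_rw [h_pt]
  rw [integral_const_mul, integral_gaussianPDFReal_eq_one _ hv, mul_one]
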